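/- Let H be a triangle-tree with triangle-decomposition (F, T). Then |F| = e(H) - v(H) + 1, and the number of edges XY of the tree T for which H[X ∩ Y] is a single edge equals 2e(H) - 3v(H) + 3. In particular, 2e(H) - 3v(H) + 3 ≤ e(H) - v(H). -/

import Mathlib

open Finset SimpleGraph


theorem tree_subtree_count {β : Type*} [Fintype β] [DecidableEq β]
    (T : SimpleGraph β) [DecidableRel T.Adj]
    (hT : T.IsTree) (P : β → Prop) [DecidablePred P]
    (q : Sym2 β → Prop) [DecidablePred q]
    (hq : ∀ X Y : β, T.Adj X Y → (q s(X, Y) ↔ P X ∧ P Y))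
    (hne : ∃ r, P r)
    (hclosed : ∀ (X Y Z : β) (p : T.Walk X Y), p.IsPath → Z ∈ p.support → P X → P Y → P Z) :
    (Finset.univ.filter P).card = (T.edgeFinset.filter q).card + 1 := by
  classical
  obtain ⟨r, hr⟩ := hne
  let up : ∀ X, T.Walk X r := fun X => (hT.existsUnique_path X r).choose
  have up_path : ∀ X, (up X).IsPath := fun X => (hT.existsUnique_path X r).choose_spec.1
  have up_unique : ∀ (X : β) (p : T.Walk X r), p.IsPath → p = up X :=
    fun X p hp => (hT.existsUnique_path X r).choose_spec.2 p hp
  have up_r : up r = Walk.nil := (up_unique r Walk.nil (Walk.IsPath.nil)).symm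
  have step : ∀ X, X ≠ r → ∃ (Y : β) (h : T.Adj X Y),
      up X = Walk.cons h (up Y) ∧ X ∉ (up Y).support := by
    intro X hX
    obtain ⟨Y, h, q0, hq0⟩ := Walk.exists_eq_cons_of_ne hX (up X)
    have hp := up_path X
    rw [hq0, Walk.cons_isPath_iff] at hp
    have hqup : q0 = up Y := up_unique Y q0 hp.1
    subst hqup
    exact ⟨Y, h, hq0, hp.2⟩
  choose nxt nxt_adj nxt_eq nxt_ns using step
  have nxt_unique : ∀ (X : β) (hX : X ≠ r) (Y : β) (h : T.Adj X Y),
      X ∉ (up Y).support → nxt X hX = Y := by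
    intro X hX Y h hns
    have hpath : (Walk.cons h (up Y)).IsPath :=
      (Walk.cons_isPath_iff _ _).mpr ⟨up_path Y, hns⟩
    have heq : Walk.cons h (up Y) = up X := up_unique X _ hpath
    rw [nxt_eq X hX] at heq
    have hsup := congrArg Walk.support heq
    simp only [Walk.support_cons, List.cons.injEq] at hsup
    have h2 := hsup.2
    rw [Walk.support_eq_cons (up Y), Walk.support_eq_cons (up (nxt X hX))] at h2
    exact (List.cons.injEq _ _ _ _ ▸ h2 : _ ∧ _).1.symm
  -- the bijection
  have hrmem : r ∈ Finset.univ.filter P := by simp [hr]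
  rw [← Finset.card_erase_add_one hrmem]
  congr 1
  refine Finset.card_bij
    (fun X hX => s(X, nxt X (Finset.ne_of_mem_erase hX))) ?_ ?_ ?_
  · intro X hX
    have hXr : X ≠ r := Finset.ne_of_mem_erase hX
    have hPX : P X := (Finset.mem_filter.mp (Finset.mem_of_mem_erase hX)).2
    have hadj := nxt_adj X hXr
    have hPn : P (nxt X hXr) := by
      refine hclosed X r _ (up X) (up_path X) ?_ hPX hr
      rw [nxt_eq X hXr, Walk.support_cons]
      exact List.mem_cons_of_mem _ (Walk.start_mem_support _)
    simp only [Finset.mem_filter, mem_edgeFinset, mem_edgeSet]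
    exact ⟨hadj, (hq _ _ hadj).mpr ⟨hPX, hPn⟩⟩
  · intro X hX X' hX' heq
    have hXr : X ≠ r := Finset.ne_of_mem_erase hX
    have hX'r : X' ≠ r := Finset.ne_of_mem_erase hX'
    rw [Sym2.eq_iff] at heq
    rcases heq with ⟨h1, _⟩ | ⟨h1, h2⟩
    · exact h1
    · exfalso
      have hns := nxt_ns X hXr
      rw [h2] at hns
      apply hns
      rw [nxt_eq X' hX'r, Walk.support_cons, ← h1]
      exact List.mem_cons_of_mem _ (Walk.start_mem_support _)
  · intro e he
    simp only [Finset.mem_filter, mem_edgeFinset, mem_edgeSet] at he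
    revert he
    induction e using Sym2.ind with
    | _ A B =>
      intro he
      obtain ⟨hadj, hqe⟩ := he
      obtain ⟨hPA, hPB⟩ := (hq _ _ hadj).mp hqe
      have memfun : ∀ x, P x → x ≠ r → x ∈ (Finset.univ.filter P).erase r := by
        intro x hPx hxr
        exact Finset.mem_erase.mpr ⟨hxr, Finset.mem_filter.mpr ⟨Finset.mem_univ _, hPx⟩⟩
      by_cases hAr : A = r
      · subst hAr
        have hBr : B ≠ A := hadj.ne'
        have hn : nxt B hBr = A := by
          apply nxt_unique
          · exact hadj.symm
          · rw [up_r, Walk.support_nil]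
            simp [hBr]
        refine ⟨B, memfun B hPB hBr, ?_⟩
        show s(B, nxt B hBr) = _
        rw [hn, Sym2.eq_swap]
      · by_cases hmem : A ∈ (up B).support
        · -- show nxt B = A
          have hBr : B ≠ r := by
            intro hBr
            subst hBr
            rw [up_r, Walk.support_nil] at hmem
            simp at hmem
            exact hAr hmem
          have hBA : B ∉ (up A).support := by
            intro hBA
            have hdrop : ((up A).dropUntil B hBA).IsPath := (up_path A).dropUntil hBA
            have hupB : (up A).dropUntil B hBA = up B := up_unique B _ hdrop
            -- A appears in up B = dropUntil, contradiction with nodup of up A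
            have hnodup : (up A).support.Nodup := (up_path A).support_nodup
            have hspec := (up A).take_spec hBA
            have hsup : (up A).support
                = ((up A).takeUntil B hBA).support ++ ((up A).dropUntil B hBA).support.tail := by
              conv_lhs => rw [← hspec]
              exact Walk.support_append _ _
            rw [hsup] at hnodup
            have hdisj := List.disjoint_of_nodup_append hnodup
            have hA1 : A ∈ ((up A).takeUntil B hBA).support := Walk.start_mem_support _
            have hA2 : A ∈ ((up A).dropUntil B hBA).support.tail := by
              have : A ∈ ((up A).dropUntil B hBA).support := by rw [hupB]; exact hmem
              rw [Walk.support_eq_cons, List.mem_cons] at this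
              rcases this with h | h
              · exact absurd h (hadj.ne)
              · exact h
            exact hdisj hA1 hA2
          have hn : nxt B hBr = A := nxt_unique B hBr A hadj.symm hBA
          refine ⟨B, memfun B hPB hBr, ?_⟩
          show s(B, nxt B hBr) = _
          rw [hn, Sym2.eq_swap]
        · have hn : nxt A hAr = B := nxt_unique A hAr B hadj hmem
          refine ⟨A, memfun A hPA hAr, ?_⟩
          show s(A, nxt A hAr) = _
          rw [hn]


lemma sum_card_filter_swap {α γ : Type*} (s : Finset α) (t : Finset γ) (R : α → γ → Prop)
    [∀ a b, Decidable (R a b)] :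
    ∑ a ∈ s, (t.filter (fun b => R a b)).card = ∑ b ∈ t, (s.filter (fun a => R a b)).card := by
  simp only [Finset.card_filter]
  exact Finset.sum_comm

lemma triangle_edge_count {V : Type*} [Fintype V] [DecidableEq V] (H : SimpleGraph V)
    [DecidableRel H.Adj] (X : Finset V) (h3 : X.card = 3)
    (hadj : ∀ a ∈ X, ∀ b ∈ X, a ≠ b → H.Adj a b) :
    (H.edgeFinset.filter (fun h => ∀ x ∈ h, x ∈ X)).card = 3 := by
  classical
  obtain ⟨a, b, c, hab, hac, hbc, rfl⟩ := Finset.card_eq_three.mp h3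
  have hset : (H.edgeFinset.filter (fun h => ∀ x ∈ h, x ∈ ({a, b, c} : Finset V)))
      = {s(a, b), s(a, c), s(b, c)} := by
    ext e
    induction e using Sym2.ind with
    | _ x y =>
      simp only [Finset.mem_filter, mem_edgeFinset, mem_edgeSet, Finset.mem_insert,
        Finset.mem_singleton]
      constructor
      · rintro ⟨hxy, hmem⟩
        have hx := hmem x (Sym2.mem_mk_left x y)
        have hy := hmem y (Sym2.mem_mk_right x y)
        have hne : x ≠ y := hxy.ne
        rcases hx with rfl | rfl | rfl <;> rcases hy with rfl | rfl | rfl <;>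
          simp only [Sym2.eq_iff] <;> tauto
      · rintro (h | h | h) <;> rw [Sym2.eq_iff] at h <;>
          rcases h with ⟨rfl, rfl⟩ | ⟨rfl, rfl⟩ <;>
          exact ⟨hadj _ (by simp) _ (by simp) (by tauto),
            fun z hz => by rcases Sym2.mem_iff.mp hz with rfl | rfl <;> simp⟩
  rw [hset]
  rw [Finset.card_insert_of_notMem, Finset.card_insert_of_notMem, Finset.card_singleton]
  · simp only [Finset.mem_singleton, Sym2.eq_iff]
    tauto
  · simp only [Finset.mem_insert, Finset.mem_singleton, Sym2.eq_iff]
    push_neg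
    tauto

section Aux

def interSym2 {V : Type*} [DecidableEq V] {𝓕 : Finset (Finset V)} :
    Sym2 {X // X ∈ 𝓕} → Finset V :=
  Sym2.lift ⟨fun X Y => (X : Finset V) ∩ (Y : Finset V), fun X Y => Finset.inter_comm _ _⟩

@[simp] lemma interSym2_mk {V : Type*} [DecidableEq V] {𝓕 : Finset (Finset V)}
    (X Y : {X // X ∈ 𝓕}) : interSym2 s(X, Y) = (X : Finset V) ∩ (Y : Finset V) := rfl

end Aux



/-- Lemma 3.2: if `H` is a triangle-tree with triangle-decomposition `(𝓕, 𝒯)` — i.e.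
`(𝓕, 𝒯)` is a tree-decomposition of `H` all of whose bags induce triangles, where
adjacent bags share a vertex or an edge — then `|𝓕| = e(H) - v(H) + 1`, the number of
tree edges `XY` for which `H[X ∩ Y]` is a single edge equals `2e(H) - 3v(H) + 3`, and
in particular `2e(H) - 3v(H) + 3 ≤ e(H) - v(H)`. -/
theorem triangleTree_counts {V : Type*} [Fintype V] [DecidableEq V]
    (H : SimpleGraph V) [DecidableRel H.Adj]
    (𝓕 : Finset (Finset V)) (𝒯 : SimpleGraph {X // X ∈ 𝓕})
    -- `𝒯` is a tree on the family of bags `𝓕`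
    (htree : 𝒯.IsTree)
    -- the bags cover all vertices
    (hcover : ∀ v : V, ∃ X ∈ 𝓕, v ∈ X)
    -- every edge of `H` is contained in a bag
    (hedge : ∀ u v : V, H.Adj u v → ∃ X ∈ 𝓕, u ∈ X ∧ v ∈ X)
    -- if `Z` lies on the path from `X` to `Y` in `𝒯`, then `X ∩ Y ⊆ Z`
    (hpath : ∀ (X Y Z : {X // X ∈ 𝓕}) (p : 𝒯.Walk X Y), p.IsPath → Z ∈ p.support →
      (X : Finset V) ∩ (Y : Finset V) ⊆ (Z : Finset V))
    -- every bag induces a triangle in `H`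
    (htri : ∀ X ∈ 𝓕, X.card = 3 ∧ ∀ a ∈ X, ∀ b ∈ X, a ≠ b → H.Adj a b)
    -- adjacent bags share a vertex or an edge
    (hglue : ∀ X Y : {X // X ∈ 𝓕}, 𝒯.Adj X Y →
      ((X : Finset V) ∩ (Y : Finset V)).card = 1 ∨
        ((X : Finset V) ∩ (Y : Finset V)).card = 2) :
    (𝓕.card : ℤ) = (H.edgeFinset.card : ℤ) - Fintype.card V + 1 ∧
    ({e ∈ 𝒯.edgeSet |
        Sym2.lift ⟨fun (X Y : {X // X ∈ 𝓕}) => ((X : Finset V) ∩ (Y : Finset V)).card,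
          fun X Y => by simp [Finset.inter_comm]⟩ e = 2}.ncard : ℤ) =
      2 * (H.edgeFinset.card : ℤ) - 3 * Fintype.card V + 3 ∧
    2 * (H.edgeFinset.card : ℤ) - 3 * Fintype.card V + 3 ≤
      (H.edgeFinset.card : ℤ) - Fintype.card V := by
  classical
  -- abbreviations
  set N := Fintype.card {X // X ∈ 𝓕} with hN
  set TE := 𝒯.edgeFinset with hTE
  set HE := H.edgeFinset with hHE
  set K := (TE.filter (fun e => (interSym2 e).card = 2)).card with hKdef
  have hcardF : 𝓕.card = N := (Fintype.card_coe 𝓕).symm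
  have hEC : TE.card + 1 = N := htree.card_edgeFinset
  have hKle : K ≤ TE.card := Finset.card_filter_le _ _
  -- rewrite the ncard set
  have hsetK : ({e ∈ 𝒯.edgeSet |
      Sym2.lift ⟨fun (X Y : {X // X ∈ 𝓕}) => ((X : Finset V) ∩ (Y : Finset V)).card,
        fun X Y => by simp [Finset.inter_comm]⟩ e = 2} : Set (Sym2 {X // X ∈ 𝓕})).ncard = K := by
    have hlift : ∀ e : Sym2 {X // X ∈ 𝓕},
        Sym2.lift ⟨fun (X Y : {X // X ∈ 𝓕}) => ((X : Finset V) ∩ (Y : Finset V)).card,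
          fun X Y => by simp [Finset.inter_comm]⟩ e = (interSym2 e).card := by
      intro e; induction e using Sym2.ind with | _ X Y => rfl
    have hseteq : {e ∈ 𝒯.edgeSet |
        Sym2.lift ⟨fun (X Y : {X // X ∈ 𝓕}) => ((X : Finset V) ∩ (Y : Finset V)).card,
          fun X Y => by simp [Finset.inter_comm]⟩ e = 2}
        = ↑(TE.filter (fun e => (interSym2 e).card = 2)) := by
      ext e
      simp only [Set.mem_setOf_eq, Finset.coe_filter, hTE, mem_edgeFinset, hlift]
    rw [hseteq, Set.ncard_coe_finset]
  -- membership of tree edges gives adjacency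
  have hadjTE : ∀ (X Y : {X // X ∈ 𝓕}), s(X, Y) ∈ TE → 𝒯.Adj X Y := by
    intro X Y h; rw [hTE, mem_edgeFinset, mem_edgeSet] at h; exact h
  -- intersection cards are 1 or 2
  have hcard12 : ∀ e ∈ TE, (interSym2 e).card = 1 ∨ (interSym2 e).card = 2 := by
    intro e
    induction e using Sym2.ind with
    | _ X Y => intro he; simpa using hglue X Y (hadjTE X Y he)
  -- sum of intersection cards
  have hsum_inter : ∑ e ∈ TE, (interSym2 e).card = TE.card + K := by
    have : ∀ e ∈ TE, (interSym2 e).card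
        = 1 + (if (interSym2 e).card = 2 then 1 else 0) := by
      intro e he
      rcases hcard12 e he with h | h <;> rw [h] <;> simp
    rw [Finset.sum_congr rfl this, Finset.sum_add_distrib, Finset.sum_const, smul_eq_mul,
      mul_one, hKdef, Finset.card_filter]
  -- per-vertex subtree count
  have F4 : ∀ v : V, (Finset.univ.filter (fun X : {X // X ∈ 𝓕} => v ∈ (X : Finset V))).card
      = (TE.filter (fun e => v ∈ interSym2 e)).card + 1 := by
    intro v
    refine tree_subtree_count 𝒯 htree _ _ ?_ ?_ ?_
    · intro X Y _
      simp [Finset.mem_inter]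
    · obtain ⟨X, hX, hv⟩ := hcover v
      exact ⟨⟨X, hX⟩, hv⟩
    · intro X Y Z p hp hZ hX hY
      exact hpath X Y Z p hp hZ (Finset.mem_inter.mpr ⟨hX, hY⟩)
  -- per-H-edge subtree count
  have F5 : ∀ h ∈ HE, (Finset.univ.filter (fun X : {X // X ∈ 𝓕} => ∀ x ∈ h, x ∈ (X : Finset V))).card
      = (TE.filter (fun e => ∀ x ∈ h, x ∈ interSym2 e)).card + 1 := by
    intro h
    induction h using Sym2.ind with
    | _ u w =>
      intro hh
      have hadj : H.Adj u w := by rwa [hHE, mem_edgeFinset, mem_edgeSet] at hh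
      refine tree_subtree_count 𝒯 htree _ _ ?_ ?_ ?_
      · intro X Y _
        constructor
        · intro hall
          have hu := hall u (Sym2.mem_mk_left u w)
          have hw := hall w (Sym2.mem_mk_right u w)
          simp only [interSym2_mk, Finset.mem_inter] at hu hw
          exact ⟨fun x hx => by rcases Sym2.mem_iff.mp hx with rfl | rfl <;> tauto,
            fun x hx => by rcases Sym2.mem_iff.mp hx with rfl | rfl <;> tauto⟩
        · rintro ⟨h1, h2⟩ x hx
          simp only [interSym2_mk, Finset.mem_inter]
          exact ⟨h1 x hx, h2 x hx⟩
      · obtain ⟨X, hX, hu, hw⟩ := hedge u w hadj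
        refine ⟨⟨X, hX⟩, fun x hx => ?_⟩
        rcases Sym2.mem_iff.mp hx with rfl | rfl <;> assumption
      · intro X Y Z p hp hZ hX hY
        intro x hx
        exact hpath X Y Z p hp hZ (Finset.mem_inter.mpr ⟨hX x hx, hY x hx⟩)
  -- per tree-edge H-edge count
  have perE : ∀ e ∈ TE, (HE.filter (fun h => ∀ x ∈ h, x ∈ interSym2 e)).card
      = (if (interSym2 e).card = 2 then 1 else 0) := by
    intro e
    induction e using Sym2.ind with
    | _ X Y =>
      intro he
      have hXY := hadjTE X Y he
      show (HE.filter (fun h => ∀ x ∈ h, x ∈ (X : Finset V) ∩ (Y : Finset V))).card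
        = if ((X : Finset V) ∩ (Y : Finset V)).card = 2 then 1 else 0
      rcases hglue X Y hXY with h1 | h2
      · rw [if_neg (show ¬((X : Finset V) ∩ (Y : Finset V)).card = 2 by omega)]
        rw [Finset.card_eq_zero, Finset.filter_eq_empty_iff]
        intro f
        induction f using Sym2.ind with
        | _ x y =>
          intro hf hall
          have hadj : H.Adj x y := by rwa [hHE, mem_edgeFinset, mem_edgeSet] at hf
          obtain ⟨z, hz⟩ := Finset.card_eq_one.mp h1
          have hx := hall x (Sym2.mem_mk_left x y)
          have hy := hall y (Sym2.mem_mk_right x y)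
          simp only [hz, Finset.mem_singleton] at hx hy
          exact hadj.ne (hx.trans hy.symm)
      · rw [if_pos h2]
        obtain ⟨a, b, hab, hab2⟩ := Finset.card_eq_two.mp h2
        have haX : a ∈ (X : Finset V) := by
          have h' : a ∈ (X : Finset V) ∩ (Y : Finset V) := by rw [hab2]; simp
          exact Finset.mem_of_mem_inter_left h'
        have hbX : b ∈ (X : Finset V) := by
          have h' : b ∈ (X : Finset V) ∩ (Y : Finset V) := by rw [hab2]; simp
          exact Finset.mem_of_mem_inter_left h'
        have hadjab : H.Adj a b := (htri X.1 X.2).2 a haX b hbX hab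
        have hfil : HE.filter (fun h => ∀ x ∈ h, x ∈ (X : Finset V) ∩ (Y : Finset V)) = {s(a, b)} := by
          ext f
          induction f using Sym2.ind with
          | _ x y =>
            simp only [Finset.mem_filter, Finset.mem_singleton, hHE, mem_edgeFinset,
              mem_edgeSet, hab2]
            constructor
            · rintro ⟨hxy, hall⟩
              have hx := hall x (Sym2.mem_mk_left x y)
              have hy := hall y (Sym2.mem_mk_right x y)
              simp only [Finset.mem_insert, Finset.mem_singleton] at hx hy
              have hne : x ≠ y := hxy.ne
              rw [Sym2.eq_iff]
              rcases hx with rfl | rfl <;> rcases hy with rfl | rfl <;> tauto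
            · intro h
              rw [Sym2.eq_iff] at h
              rcases h with ⟨rfl, rfl⟩ | ⟨rfl, rfl⟩
              · exact ⟨hadjab, fun z hz => by
                  rcases Sym2.mem_iff.mp hz with rfl | rfl <;> simp⟩
              · exact ⟨hadjab.symm, fun z hz => by
                  rcases Sym2.mem_iff.mp hz with rfl | rfl <;> simp⟩
        rw [hfil, Finset.card_singleton]
  -- Equation A : 3 * N = card V + (TE.card + K)
  have eqA : 3 * N = Fintype.card V + (TE.card + K) := by
    have h1 : ∑ X : {X // X ∈ 𝓕}, (X : Finset V).card = 3 * N := by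
      rw [Finset.sum_congr rfl (fun (X : {X // X ∈ 𝓕}) _ => (htri X.1 X.2).1), Finset.sum_const,
        smul_eq_mul, Finset.card_univ, mul_comm]
    have h2 : ∀ X : {X // X ∈ 𝓕}, (X : Finset V).card
        = (Finset.univ.filter (fun v : V => v ∈ (X : Finset V))).card := by
      intro X; congr 1; ext v; simp
    have h3 : ∑ X : {X // X ∈ 𝓕}, (Finset.univ.filter (fun v : V => v ∈ (X : Finset V))).card
        = ∑ v : V, (Finset.univ.filter (fun X : {X // X ∈ 𝓕} => v ∈ (X : Finset V))).card :=
      sum_card_filter_swap Finset.univ Finset.univ (fun (X : {X // X ∈ 𝓕}) (v : V) => v ∈ (X : Finset V))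
    have h4 : ∑ v : V, (Finset.univ.filter (fun X : {X // X ∈ 𝓕} => v ∈ (X : Finset V))).card
        = (∑ v : V, (TE.filter (fun e => v ∈ interSym2 e)).card) + Fintype.card V := by
      rw [Finset.sum_congr rfl (fun v _ => F4 v), Finset.sum_add_distrib, Finset.sum_const,
        smul_eq_mul, mul_one, Finset.card_univ]
    have h5 : ∑ v : V, (TE.filter (fun e => v ∈ interSym2 e)).card
        = ∑ e ∈ TE, (Finset.univ.filter (fun v : V => v ∈ interSym2 e)).card :=
      sum_card_filter_swap Finset.univ TE (fun (v : V) (e : Sym2 {X // X ∈ 𝓕}) => v ∈ interSym2 e)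
    have h6 : ∀ e : Sym2 {X // X ∈ 𝓕}, (Finset.univ.filter (fun v : V => v ∈ interSym2 e)).card
        = (interSym2 e).card := by
      intro e; congr 1; ext v; simp
    rw [← h1, Finset.sum_congr rfl (fun X _ => h2 X), h3, h4, h5,
      Finset.sum_congr rfl (fun e _ => h6 e), hsum_inter]
    ring
  -- Equation B : 3 * N = HE.card + K
  have eqB : 3 * N = HE.card + K := by
    have h1 : ∑ X : {X // X ∈ 𝓕}, (HE.filter (fun h => ∀ x ∈ h, x ∈ (X : Finset V))).card = 3 * N := by
      rw [Finset.sum_congr rfl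
        (fun (X : {X // X ∈ 𝓕}) _ =>
          triangle_edge_count H (X : Finset V) (htri X.1 X.2).1 (htri X.1 X.2).2),
        Finset.sum_const, smul_eq_mul, Finset.card_univ, mul_comm]
    have h2 : ∑ X : {X // X ∈ 𝓕}, (HE.filter (fun h => ∀ x ∈ h, x ∈ (X : Finset V))).card
        = ∑ h ∈ HE, (Finset.univ.filter (fun X : {X // X ∈ 𝓕} => ∀ x ∈ h, x ∈ (X : Finset V))).card :=
      sum_card_filter_swap Finset.univ HE (fun (X : {X // X ∈ 𝓕}) (h : Sym2 V) => ∀ x ∈ h, x ∈ (X : Finset V))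
    have h3 : ∑ h ∈ HE, (Finset.univ.filter (fun X : {X // X ∈ 𝓕} => ∀ x ∈ h, x ∈ (X : Finset V))).card
        = (∑ h ∈ HE, (TE.filter (fun e => ∀ x ∈ h, x ∈ interSym2 e)).card) + HE.card := by
      rw [Finset.sum_congr rfl F5, Finset.sum_add_distrib, Finset.sum_const,
        smul_eq_mul, mul_one]
    have h4 : ∑ h ∈ HE, (TE.filter (fun e => ∀ x ∈ h, x ∈ interSym2 e)).card
        = ∑ e ∈ TE, (HE.filter (fun h => ∀ x ∈ h, x ∈ interSym2 e)).card :=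
      sum_card_filter_swap HE TE (fun (h : Sym2 V) (e : Sym2 {X // X ∈ 𝓕}) => ∀ x ∈ h, x ∈ interSym2 e)
    have h5 : ∑ e ∈ TE, (HE.filter (fun h => ∀ x ∈ h, x ∈ interSym2 e)).card = K := by
      rw [Finset.sum_congr rfl perE, hKdef, Finset.card_filter]
    omega
  rw [hsetK]
  refine ⟨by omega, by omega, by omega⟩
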